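/- Chain rule I for min-entropy: for any subnormalized positive semidefinite operator ρ on H_A ⊗ H_B ⊗ H_C and any normalized state σ_C on H_C, if ρ_ABC ≤ 2^{-a} · 1_A ⊗ ρ_BC and ρ_BC ≤ 2^{-b} · 1_B ⊗ σ_C, then ρ_ABC ≤ 2^{-(a+b)} · 1_{AB} ⊗ σ_C. In entropy notation: H_min(A|BC)_{ρ|ρ} ≤ H_min(AB|C)_{ρ|σ} − H_min(B|C)_{ρ|σ}. -/

import Mathlib

open Matrix
open scoped Kronecker ComplexOrder Classical

noncomputable section

variable {α β γ : Type*} [Fintype α] [DecidableEq α] [Fintype β] [DecidableEq β]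
  [Fintype γ] [DecidableEq γ]

/-- partial trace over the first tensor factor. -/
def ptrFst (ρ : Matrix (α × β) (α × β) ℂ) : Matrix β β ℂ :=
  fun p q => ∑ i, ρ (i, p) (i, q)

private lemma psd_real_smul {n : Type*} [Fintype n] {M : Matrix n n ℂ}
    (hM : M.PosSemidef) {c : ℝ} (hc : 0 ≤ c) : ((c : ℂ) • M).PosSemidef := by
  rw [posSemidef_iff_dotProduct_mulVec]
  constructor
  · unfold Matrix.IsHermitian
    rw [conjTranspose_smul, hM.1.eq]
    congr 1
    simp
  · intro x
    have h := hM.dotProduct_mulVec_nonneg x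
    have : star x ⬝ᵥ ((c : ℂ) • M).mulVec x = (c : ℂ) * (star x ⬝ᵥ M.mulVec x) := by
      simp [Matrix.smul_mulVec, dotProduct_smul]
    rw [this]
    exact mul_nonneg (by exact_mod_cast Complex.zero_le_real.mpr hc) h

private lemma psd_one_kron {n m : Type*} [Fintype n] [DecidableEq n] [Fintype m]
    {M : Matrix m m ℂ} (hM : M.PosSemidef) :
    ((1 : Matrix n n ℂ) ⊗ₖ M).PosSemidef := by
  rw [posSemidef_iff_dotProduct_mulVec]
  constructor
  · unfold Matrix.IsHermitian
    ext ⟨i, p⟩ ⟨j, q⟩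
    simp only [conjTranspose_apply, kronecker_apply, one_apply, star_mul']
    by_cases h : j = i
    · subst h; simp [hM.1.apply]
    · simp [h, Ne.symm h]
  · intro x
    have key : star x ⬝ᵥ ((1 : Matrix n n ℂ) ⊗ₖ M).mulVec x
        = ∑ i : n, star (fun p => x (i, p)) ⬝ᵥ M.mulVec (fun p => x (i, p)) := by
      simp only [dotProduct, mulVec, dotProduct, Fintype.sum_prod_type,
        kronecker_apply, one_apply, Pi.star_apply]
      refine Finset.sum_congr rfl fun i _ => Finset.sum_congr rfl fun p _ => ?_
      rw [Finset.sum_eq_single i]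
      · simp
      · intro j _ hj; simp [Ne.symm hj]
      · simp
    rw [key]
    exact Finset.sum_nonneg fun i _ => hM.dotProduct_mulVec_nonneg _
  
/-- Chain rule I for the min-entropy: for a subnormalized `ρ_ABC` and a
normalized `σ_C`, if `ρ_ABC ≤ 2^{-a} 1_A ⊗ ρ_BC` and `ρ_BC ≤ 2^{-b} 1_B ⊗ σ_C`,
then `ρ_ABC ≤ 2^{-(a+b)} 1_{AB} ⊗ σ_C`; i.e.
`H_min(A|BC)_{ρ|ρ} ≤ H_min(AB|C)_{ρ|σ} − H_min(B|C)_{ρ|σ}`. -/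
theorem Hmin_chain_rule_I
    (ρ : Matrix (α × β × γ) (α × β × γ) ℂ) (hρ : ρ.PosSemidef)
    (hρtr : ρ.trace.re ≤ 1)
    (σC : Matrix γ γ ℂ) (hσ : σC.PosSemidef) (hσtr : σC.trace = 1)
    (a b : ℝ)
    (ha : ((((2 : ℝ) ^ (-a) : ℝ) : ℂ) • ((1 : Matrix α α ℂ) ⊗ₖ ptrFst ρ)
            - ρ).PosSemidef)
    (hb : ((((2 : ℝ) ^ (-b) : ℝ) : ℂ) • ((1 : Matrix β β ℂ) ⊗ₖ σC)
            - ptrFst ρ).PosSemidef) :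
    ((((2 : ℝ) ^ (-(a + b)) : ℝ) : ℂ) •
        ((1 : Matrix α α ℂ) ⊗ₖ ((1 : Matrix β β ℂ) ⊗ₖ σC))
      - ρ).PosSemidef := by
  have h2a : (0:ℝ) ≤ (2:ℝ) ^ (-a) := Real.rpow_nonneg (by norm_num) _
  have hsum : ((((2 : ℝ) ^ (-(a + b)) : ℝ) : ℂ) •
        ((1 : Matrix α α ℂ) ⊗ₖ ((1 : Matrix β β ℂ) ⊗ₖ σC)) - ρ)
      = ((((2 : ℝ) ^ (-a) : ℝ) : ℂ) • ((1 : Matrix α α ℂ) ⊗ₖ ptrFst ρ) - ρ)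
        + (((2 : ℝ) ^ (-a) : ℝ) : ℂ) •
            ((1 : Matrix α α ℂ) ⊗ₖ
              ((((2 : ℝ) ^ (-b) : ℝ) : ℂ) • ((1 : Matrix β β ℂ) ⊗ₖ σC)
                - ptrFst ρ)) := by
    have hpow : ((2:ℝ) ^ (-(a+b)) : ℝ) = (2:ℝ) ^ (-a) * (2:ℝ) ^ (-b) := by
      rw [neg_add, Real.rpow_add (by norm_num)]
    ext ⟨i, p, c⟩ ⟨j, q, d⟩
    simp only [Matrix.sub_apply, Matrix.add_apply, Matrix.smul_apply,
      kronecker_apply, one_apply, smul_eq_mul]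
    push_cast [hpow]
    split_ifs <;> ring
  rw [hsum]
  exact ha.add (psd_real_smul (psd_one_kron hb) h2a)
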